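/- Let X, Y be discrete random variables and T a deterministic function of X inducing a partition 𝒜 with I(X,Y) − I(T(X),Y) ≤ ε. Then Σ_{A∈𝒜} max_{x_1,x_2∈A} [P(x_1)P(x_2)/(2(P(x_1)+P(x_2)))] · D_1(P_{Y|x_1}, P_{Y|x_2})² ≤ ε, where the max over singleton clusters is taken to be 0. -/

import Mathlib

open Finset

noncomputable section

/-- Marginal of X under joint P. -/
def margX {α β : Type*} [Fintype β] (P : α → β → ℝ) (x : α) : ℝ := ∑ y, P x y

/-- Marginal of Y under joint P. -/
def margY {α β : Type*} [Fintype α] (P : α → β → ℝ) (y : β) : ℝ := ∑ x, P x y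

/-- Conditional probability P(y|x). -/
def condYX {α β : Type*} [Fintype β] (P : α → β → ℝ) (y : β) (x : α) : ℝ := P x y / margX P x

/-- Conditional probability P(x|y). -/
def condXY {α β : Type*} [Fintype α] (P : α → β → ℝ) (x : α) (y : β) : ℝ := P x y / margY P y

/-- Mutual information of a discrete joint distribution (natural log). -/
def MI {α β : Type*} [Fintype α] [Fintype β] (P : α → β → ℝ) : ℝ :=
  ∑ x, ∑ y, P x y * Real.log (P x y / (margX P x * margY P y))

/-- Joint distribution of (T(X), Y). -/
def jointT {α β τ : Type*} [Fintype α] [DecidableEq τ] (P : α → β → ℝ) (T : α → τ)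
    (t : τ) (y : β) : ℝ :=
  ∑ x ∈ Finset.univ.filter (fun x => T x = t), P x y

/-- Conditional distribution of Y given the cluster T(X) = t. -/
def condYT {α β τ : Type*} [Fintype α] [Fintype β] [DecidableEq τ] (P : α → β → ℝ)
    (T : α → τ) (t : τ) (y : β) : ℝ :=
  jointT P T t y / (∑ x ∈ Finset.univ.filter (fun x => T x = t), margX P x)

/-- Kullback–Leibler divergence (natural log). -/
def KL {β : Type*} [Fintype β] (p q : β → ℝ) : ℝ := ∑ y, p y * Real.log (p y / q y)

/-- L1 distance between distributions. -/
def D1 {β : Type*} [Fintype β] (p q : β → ℝ) : ℝ := ∑ y, |p y - q y|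
open scoped Classical

/-- Per-pair bound term within a cluster. -/
def pairTerm {α β : Type*} [Fintype α] [Fintype β] (P : α → β → ℝ) (x₁ x₂ : α) : ℝ :=
  margX P x₁ * margX P x₂ / (2 * (margX P x₁ + margX P x₂)) *
    D1 (fun y => condYX P y x₁) (fun y => condYX P y x₂) ^ 2

/-- Max of the pair terms over a cluster (0 for empty clusters; 0 for
singleton clusters since the only pair is the diagonal one). -/
def clusterMaxTerm {α β τ : Type*} [Fintype α] [Fintype β] (P : α → β → ℝ)
    (T : α → τ) (t : τ) : ℝ :=
  if h : ((Finset.univ.filter fun x => T x = t) ×ˢ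
      (Finset.univ.filter fun x => T x = t)).Nonempty then
    ((Finset.univ.filter fun x => T x = t) ×ˢ
      (Finset.univ.filter fun x => T x = t)).sup' h (fun p => pairTerm P p.1 p.2)
  else 0


lemma aux_hasDeriv (x : ℝ) (hx : 0 < x) :
    HasDerivAt (fun y : ℝ => Real.log y - 2*(y-1)/(y+1))
      (x⁻¹ - (2*(x+1) - 2*(x-1)*1)/((x+1)^2)) x := by
  have h1 : HasDerivAt (fun y : ℝ => 2*(y-1)) 2 x := by
    simpa using ((hasDerivAt_id x).sub_const 1).const_mul 2
  have h2 : HasDerivAt (fun y : ℝ => y+1) 1 x := (hasDerivAt_id x).add_const 1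
  have h3 := h1.div h2 (by linarith)
  exact (Real.hasDerivAt_log hx.ne').sub h3

lemma log_pade {x : ℝ} (hx : 1 ≤ x) : 2*(x-1)/(x+1) ≤ Real.log x := by
  set f : ℝ → ℝ := fun y => Real.log y - 2*(y-1)/(y+1) with hf
  have key : MonotoneOn f (Set.Ici 1) := by
    apply monotoneOn_of_deriv_nonneg (convex_Ici 1)
    · intro z hz
      simp only [Set.mem_Ici] at hz
      exact ((aux_hasDeriv z (by linarith)).continuousAt).continuousWithinAt
    · intro z hz
      rw [interior_Ici] at hz
      simp only [Set.mem_Ioi] at hz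
      exact ((aux_hasDeriv z (by linarith)).differentiableAt).differentiableWithinAt
    · intro z hz
      rw [interior_Ici] at hz
      simp only [Set.mem_Ioi] at hz
      have hz0 : (0:ℝ) < z := by linarith
      rw [(aux_hasDeriv z hz0).deriv]
      rw [sub_nonneg, div_le_iff₀ (by positivity)]
      have h1 : z * z⁻¹ = 1 := mul_inv_cancel₀ hz0.ne'
      nlinarith [sq_nonneg (z-1), hz0, mul_pos hz0 hz0]
  have h := key (Set.mem_Ici.2 le_rfl) (Set.mem_Ici.2 hx) hx
  simp only [hf, Real.log_one] at h
  norm_num at h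
  linarith [h]

lemma log_pade' {x : ℝ} (hx0 : 0 < x) (hx : x ≤ 1) : Real.log x ≤ 2*(x-1)/(x+1) := by
  have h := log_pade (x := x⁻¹) (one_le_inv_iff₀.2 ⟨hx0, hx⟩)
  rw [Real.log_inv] at h
  have heq : 2*(x⁻¹-1)/(x⁻¹+1) = -(2*(x-1)/(x+1)) := by
    have hx1 : x + 1 ≠ 0 := by positivity
    have hxi : x⁻¹ + 1 ≠ 0 := by positivity
    field_simp
    ring
  rw [heq] at h
  linarith

lemma g_hasDeriv (x : ℝ) (hx : 0 < x) :
    HasDerivAt (fun y : ℝ => (y*Real.log y - y + 1)*(2*y+4) - 3*(y-1)^2)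
      (4*((x+1)*Real.log x - 2*(x-1))) x := by
  have h1 : HasDerivAt (fun y : ℝ => y*Real.log y - y + 1) (Real.log x + 1 - 1) x :=
    ((Real.hasDerivAt_mul_log hx.ne').sub (hasDerivAt_id x)).add_const 1
  have h2 : HasDerivAt (fun y : ℝ => 2*y+4) 2 x := by
    simpa using ((hasDerivAt_id x).const_mul 2).add_const 4
  have h4 : HasDerivAt (fun y : ℝ => 3*(y-1)^2) (3*(2*(x-1)^1*1)) x :=
    (((hasDerivAt_id x).sub_const 1).pow 2).const_mul 3
  have : HasDerivAt (fun y : ℝ => (y*Real.log y - y + 1)*(2*y+4) - 3*(y-1)^2)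
      ((Real.log x + 1 - 1) * (2 * x + 4) + (x * Real.log x - x + 1) * 2 - 3 * (2 * (x - 1) ^ 1 * 1)) x :=
    (h1.mul h2).sub h4
  convert this using 1
  ring

lemma g_nonneg {x : ℝ} (hx : 0 < x) :
    0 ≤ (x*Real.log x - x + 1)*(2*x+4) - 3*(x-1)^2 := by
  set g : ℝ → ℝ := fun y => (y*Real.log y - y + 1)*(2*y+4) - 3*(y-1)^2 with hg
  have hg1 : g 1 = 0 := by simp [hg]
  rcases le_total 1 x with hx1 | hx1
  · have key : MonotoneOn g (Set.Ici 1) := by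
      apply monotoneOn_of_deriv_nonneg (convex_Ici 1)
      · exact fun z hz => ((g_hasDeriv z (by simp at hz; linarith)).continuousAt).continuousWithinAt
      · intro z hz
        rw [interior_Ici] at hz; simp only [Set.mem_Ioi] at hz
        exact ((g_hasDeriv z (by linarith)).differentiableAt).differentiableWithinAt
      · intro z hz
        rw [interior_Ici] at hz; simp only [Set.mem_Ioi] at hz
        rw [(g_hasDeriv z (by linarith)).deriv]
        have := log_pade (le_of_lt hz)
        have hz1 : (0:ℝ) < z + 1 := by linarith
        rw [div_le_iff₀ hz1] at this
        nlinarith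
    have := key (Set.mem_Ici.2 le_rfl) (Set.mem_Ici.2 hx1) hx1
    rw [hg1] at this; exact this
  · have key : AntitoneOn g (Set.Ioc 0 1) := by
      apply antitoneOn_of_deriv_nonpos (convex_Ioc 0 1)
      · exact fun z hz => ((g_hasDeriv z hz.1).continuousAt).continuousWithinAt
      · intro z hz
        rw [interior_Ioc] at hz
        exact ((g_hasDeriv z hz.1).differentiableAt).differentiableWithinAt
      · intro z hz
        rw [interior_Ioc] at hz
        rw [(g_hasDeriv z hz.1).deriv]
        have := log_pade' hz.1 (le_of_lt hz.2)
        have hz1 : (0:ℝ) < z + 1 := by linarith [hz.1]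
        rw [le_div_iff₀ hz1] at this
        nlinarith [hz.1, hz.2]
    have := key (Set.mem_Ioc.2 ⟨hx, hx1⟩) (Set.mem_Ioc.2 ⟨one_pos, le_rfl⟩) hx1
    rw [hg1] at this; exact this

lemma pointwise_kl {p q : ℝ} (hp : 0 < p) (hq : 0 < q) :
    3*(p-q)^2/(2*p+4*q) ≤ p*Real.log (p/q) - p + q := by
  have hx : 0 < p/q := div_pos hp hq
  have hg := g_nonneg hx
  set x := p/q with hxd
  have h1 : p*Real.log (p/q) - p + q = q*(x*Real.log x - x + 1) := by
    rw [hxd]; field_simp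
  have h2 : 3*(p-q)^2/(2*p+4*q) = q*(3*(x-1)^2/(2*x+4)) := by
    have hd1 : (2*p+4*q) ≠ 0 := by positivity
    have hd2 : 2*x+4 ≠ 0 := by positivity
    rw [hxd] at hd2 ⊢
    field_simp
  rw [h1, h2]
  apply mul_le_mul_of_nonneg_left _ hq.le
  rw [div_le_iff₀ (by positivity)]
  linarith

lemma kl_ge_pointwise {β : Type*} [Fintype β] {p q : β → ℝ} (hp : ∀ y, 0 < p y)
    (hq : ∀ y, 0 < q y) (hps : ∑ y, p y = 1) (hqs : ∑ y, q y = 1) :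
    ∑ y, (p y * Real.log (p y / q y) - p y + q y) = KL p q := by
  rw [Finset.sum_add_distrib, Finset.sum_sub_distrib, hps, hqs, KL]
  ring

lemma kl_nonneg {β : Type*} [Fintype β] {p q : β → ℝ} (hp : ∀ y, 0 < p y)
    (hq : ∀ y, 0 < q y) (hps : ∑ y, p y = 1) (hqs : ∑ y, q y = 1) : 0 ≤ KL p q := by
  rw [← kl_ge_pointwise hp hq hps hqs]
  apply Finset.sum_nonneg
  intro y _
  have h := Real.one_sub_inv_le_log_of_pos (div_pos (hp y) (hq y))
  rw [show (p y / q y)⁻¹ = q y / p y by rw [inv_div]] at h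
  have := mul_le_mul_of_nonneg_left h (hp y).le
  rw [mul_sub, mul_one, mul_div_cancel₀ _ (hp y).ne'] at this
  linarith

lemma pinsker {β : Type*} [Fintype β] {p q : β → ℝ} (hp : ∀ y, 0 < p y)
    (hq : ∀ y, 0 < q y) (hps : ∑ y, p y = 1) (hqs : ∑ y, q y = 1) :
    D1 p q ^ 2 / 2 ≤ KL p q := by
  rw [← kl_ge_pointwise hp hq hps hqs]
  have step1 : ∑ y, 3*(p y - q y)^2/(2*p y+4*q y) ≤
      ∑ y, (p y * Real.log (p y / q y) - p y + q y) :=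
    Finset.sum_le_sum fun y _ => pointwise_kl (hp y) (hq y)
  refine le_trans ?_ step1
  have hsed := Finset.sq_sum_div_le_sum_sq_div Finset.univ (fun y => |p y - q y|)
    (g := fun y => 2*p y + 4*q y) (fun y _ => by have := hp y; have := hq y; positivity)
  have hden : ∑ y, (2*p y + 4*q y) = 6 := by
    rw [Finset.sum_add_distrib, ← Finset.mul_sum, ← Finset.mul_sum, hps, hqs]; norm_num
  rw [hden] at hsed
  simp only [sq_abs] at hsed
  have h2 : ∑ y, 3*(p y - q y)^2/(2*p y+4*q y) = 3 * ∑ y, (p y - q y)^2/(2*p y+4*q y) := by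
    rw [Finset.mul_sum]; congr 1; ext y; ring
  rw [h2, D1]
  nlinarith [hsed]

lemma D1_mix {β : Type*} [Fintype β] (p q : β → ℝ) {c : ℝ} (hc0 : 0 ≤ c) (hc1 : c ≤ 1) :
    D1 p (fun y => (1-c) * p y + c * q y) = c * D1 p q := by
  rw [D1, D1, Finset.mul_sum]
  apply Finset.sum_congr rfl
  intro y _
  have h : p y - ((1-c) * p y + c * q y) = c * (p y - q y) := by ring
  rw [h, abs_mul, abs_of_nonneg hc0]

lemma kl_shift {β : Type*} [Fintype β] {p m Q : β → ℝ} (hp : ∀ y, 0 < p y)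
    (hm : ∀ y, 0 < m y) (hQ : ∀ y, 0 < Q y) :
    KL p Q = KL p m + ∑ y, p y * Real.log (m y / Q y) := by
  rw [KL, KL, ← Finset.sum_add_distrib]
  apply Finset.sum_congr rfl
  intro y _
  have h : p y / Q y = (p y / m y) * (m y / Q y) := by
    rw [div_mul_div_comm, mul_comm (p y) (m y), mul_div_mul_left _ _ (hm y).ne']
  rw [h, Real.log_mul (ne_of_gt (div_pos (hp y) (hm y))) (ne_of_gt (div_pos (hm y) (hQ y))),
    mul_add]

lemma js_bound {β : Type*} [Fintype β] {p q Q : β → ℝ} {w₁ w₂ : ℝ}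
    (hw₁ : 0 < w₁) (hw₂ : 0 < w₂)
    (hp : ∀ y, 0 < p y) (hq : ∀ y, 0 < q y) (hQ : ∀ y, 0 < Q y)
    (hps : ∑ y, p y = 1) (hqs : ∑ y, q y = 1) (hQs : ∑ y, Q y = 1) :
    w₁ * w₂ / (2 * (w₁ + w₂)) * D1 p q ^ 2 ≤ w₁ * KL p Q + w₂ * KL q Q := by
  set s := w₁ + w₂ with hs
  have hs0 : 0 < s := by positivity
  set π₁ := w₁ / s with hπ₁
  set π₂ := w₂ / s with hπ₂
  have hπsum : π₁ + π₂ = 1 := by rw [hπ₁, hπ₂, ← add_div, hs, div_self hs0.ne']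
  have hπ₁0 : 0 < π₁ := by positivity
  have hπ₂0 : 0 < π₂ := by positivity
  set M : β → ℝ := fun y => π₁ * p y + π₂ * q y with hM
  have hMpos : ∀ y, 0 < M y := fun y => by
    have := hp y; have := hq y; rw [hM]; positivity
  have hMs : ∑ y, M y = 1 := by
    simp only [hM]
    rw [Finset.sum_add_distrib, ← Finset.mul_sum, ← Finset.mul_sum, hps, hqs]
    simpa using hπsum
  -- decomposition
  have hdec : w₁ * KL p Q + w₂ * KL q Q
      = w₁ * KL p M + w₂ * KL q M + s * KL M Q := by
    rw [kl_shift hp hMpos hQ, kl_shift hq hMpos hQ]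
    have : s * KL M Q = w₁ * ∑ y, p y * Real.log (M y / Q y)
        + w₂ * ∑ y, q y * Real.log (M y / Q y) := by
      rw [KL, Finset.mul_sum, Finset.mul_sum, Finset.mul_sum, ← Finset.sum_add_distrib]
      congr 1; ext y
      have : s * M y = w₁ * p y + w₂ * q y := by
        rw [hM, hπ₁, hπ₂]; field_simp
      rw [show s * (M y * Real.log (M y / Q y)) = (s * M y) * Real.log (M y / Q y) by ring,
        this]
      ring
    rw [this]; ring
  rw [hdec]
  have hKLMQ : 0 ≤ KL M Q := kl_nonneg hMpos hQ hMs hQs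
  have hpin₁ : D1 p M ^ 2 / 2 ≤ KL p M := pinsker hp hMpos hps hMs
  have hpin₂ : D1 q M ^ 2 / 2 ≤ KL q M := pinsker hq hMpos hqs hMs
  have hD₁ : D1 p M = π₂ * D1 p q := by
    have : M = fun y => (1 - π₂) * p y + π₂ * q y := by
      ext y; rw [hM]; rw [show π₁ = 1 - π₂ by linarith]
    rw [this]
    exact D1_mix p q hπ₂0.le (by linarith)
  have hD₂ : D1 q M = π₁ * D1 p q := by
    have : M = fun y => (1 - π₁) * q y + π₁ * p y := by
      ext y; rw [hM]; rw [show π₂ = 1 - π₁ by linarith]; ring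
    rw [this, D1_mix q p hπ₁0.le (by linarith)]
    rw [D1, D1]
    congr 1
    exact Finset.sum_congr rfl fun y _ => abs_sub_comm _ _
  have key : w₁ * (D1 p M ^2/2) + w₂ * (D1 q M ^2/2) = w₁*w₂/(2*s) * D1 p q ^2 := by
    rw [hD₁, hD₂, hπ₁, hπ₂]
    field_simp
    ring
  have h1 : w₁ * (D1 p M ^2/2) ≤ w₁ * KL p M := mul_le_mul_of_nonneg_left hpin₁ hw₁.le
  have h2 : w₂ * (D1 q M ^2/2) ≤ w₂ * KL q M := mul_le_mul_of_nonneg_left hpin₂ hw₂.le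
  nlinarith [mul_nonneg hs0.le hKLMQ]

lemma margY_jointT {α β τ : Type*} [Fintype α] [Fintype β] [Fintype τ] [DecidableEq τ]
    (P : α → β → ℝ) (T : α → τ) (y : β) : margY (jointT P T) y = margY P y := by
  rw [margY, margY]
  simp only [jointT]
  exact Finset.sum_fiberwise Finset.univ T (fun x => P x y)

lemma margX_jointT {α β τ : Type*} [Fintype α] [Fintype β] [DecidableEq τ]
    (P : α → β → ℝ) (T : α → τ) (t : τ) :
    margX (jointT P T) t = ∑ x ∈ Finset.univ.filter (fun x => T x = t), margX P x := by
  rw [margX]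
  simp only [jointT, margX]
  exact Finset.sum_comm

lemma cluster_decomp {α β τ : Type*} [Fintype α] [Fintype β] [Fintype τ] [DecidableEq τ]
    (P : α → β → ℝ) (hP : ∀ x y, 0 < P x y) (hmx : ∀ x, 0 < margX P x)
    (hmy : ∀ y, 0 < margY P y) (T : α → τ) (t : τ)
    (ht : (Finset.univ.filter fun x => T x = t).Nonempty) :
    (∑ x ∈ Finset.univ.filter (fun x => T x = t),
        ∑ y, P x y * Real.log (P x y / (margX P x * margY P y)))
      - (∑ y, jointT P T t y *
          Real.log (jointT P T t y / (margX (jointT P T) t * margY (jointT P T) y)))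
    = ∑ x ∈ Finset.univ.filter (fun x => T x = t),
        margX P x * KL (fun y => condYX P y x) (condYT P T t) := by
  classical
  set A := Finset.univ.filter (fun x => T x = t) with hA
  set q : ℝ := ∑ x ∈ A, margX P x with hqd
  have hq : 0 < q := Finset.sum_pos (fun x _ => hmx x) ht
  have hJ : ∀ y, 0 < jointT P T t y := fun y =>
    Finset.sum_pos (fun x _ => hP x y) ht
  have e1 : ∀ x ∈ A, ∑ y, P x y * Real.log (P x y / (margX P x * margY P y))
      = ∑ y, P x y * (Real.log (P x y) - Real.log (margX P x) - Real.log (margY P y)) := by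
    intro x _
    apply Finset.sum_congr rfl
    intro y _
    rw [Real.log_div (hP x y).ne' (mul_pos (hmx x) (hmy y)).ne',
      Real.log_mul (hmx x).ne' (hmy y).ne']
    ring
  have e2 : (∑ y, jointT P T t y *
        Real.log (jointT P T t y / (margX (jointT P T) t * margY (jointT P T) y)))
      = ∑ x ∈ A, ∑ y, P x y *
          (Real.log (jointT P T t y) - Real.log q - Real.log (margY P y)) := by
    rw [Finset.sum_comm]
    apply Finset.sum_congr rfl
    intro y _
    rw [margY_jointT, margX_jointT, ← hqd, Real.log_div (hJ y).ne' (mul_pos hq (hmy y)).ne',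
      Real.log_mul hq.ne' (hmy y).ne']
    rw [show jointT P T t y = ∑ x ∈ A, P x y from rfl, Finset.sum_mul]
    apply Finset.sum_congr rfl
    intro x _
    ring
  have e3 : ∀ x ∈ A, margX P x * KL (fun y => condYX P y x) (condYT P T t)
      = ∑ y, P x y * (Real.log (P x y) - Real.log (margX P x)
          - (Real.log (jointT P T t y) - Real.log q)) := by
    intro x _
    rw [KL, Finset.mul_sum]
    apply Finset.sum_congr rfl
    intro y _
    have hc : condYX P y x = P x y / margX P x := rfl
    have hc2 : condYT P T t y = jointT P T t y / q := rfl
    rw [hc, hc2, Real.log_div (div_pos (hP x y) (hmx x)).ne' (div_pos (hJ y) hq).ne',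
      Real.log_div (hP x y).ne' (hmx x).ne', Real.log_div (hJ y).ne' hq.ne']
    have hcan : margX P x * (P x y / margX P x) = P x y := by
      rw [mul_comm, div_mul_eq_mul_div, mul_div_assoc, div_self (hmx x).ne', mul_one]
    rw [← mul_assoc, hcan]
  rw [e2, ← Finset.sum_sub_distrib]
  rw [Finset.sum_congr rfl e3]
  apply Finset.sum_congr rfl
  intro x hx
  rw [e1 x hx, ← Finset.sum_sub_distrib]
  apply Finset.sum_congr rfl
  intro y _
  ring

/-- Theorem 2 (main bound): if the information loss is at most ε, the sum over
clusters of the maximal pairwise bound terms is at most ε. -/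
theorem IB_cluster_max_bound {α β τ : Type*} [Fintype α] [Fintype β] [Fintype τ]
    (P : α → β → ℝ) (hP : ∀ x y, 0 < P x y) (hsum : ∑ x, ∑ y, P x y = 1)
    (T : α → τ) (ε : ℝ) (hloss : MI P - MI (jointT P T) ≤ ε) :
    ∑ t, clusterMaxTerm P T t ≤ ε := by
  classical
  have hβ : Nonempty β := by
    by_contra h
    rw [not_nonempty_iff] at h
    simp [Finset.univ_eq_empty] at hsum
  have hα : Nonempty α := by
    by_contra h
    rw [not_nonempty_iff] at h
    simp [Finset.univ_eq_empty] at hsum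
  have hmx : ∀ x, 0 < margX P x := fun x =>
    Finset.sum_pos (fun y _ => hP x y) Finset.univ_nonempty
  have hmy : ∀ y, 0 < margY P y := fun y =>
    Finset.sum_pos (fun x _ => hP x y) Finset.univ_nonempty
  set C : τ → ℝ := fun t => ∑ x ∈ Finset.univ.filter (fun x => T x = t),
      margX P x * KL (fun y => condYX P y x) (condYT P T t) with hC
  have hdecomp : MI P - MI (jointT P T) = ∑ t, C t := by
    rw [MI, MI]
    rw [← Finset.sum_fiberwise Finset.univ T
      (fun x => ∑ y, P x y * Real.log (P x y / (margX P x * margY P y)))]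
    rw [← Finset.sum_sub_distrib]
    apply Finset.sum_congr rfl
    intro t _
    by_cases ht : (Finset.univ.filter fun x => T x = t).Nonempty
    · exact cluster_decomp P hP hmx hmy T t ht
    · rw [Finset.not_nonempty_iff_eq_empty] at ht
      simp only [hC, ht, Finset.sum_empty, jointT, Finset.sum_const_zero, zero_mul,
        zero_sub, neg_eq_zero]
  -- facts about conditional distributions
  have hcondYX_pos : ∀ x y, 0 < condYX P y x := fun x y => div_pos (hP x y) (hmx x)
  have hcondYX_sum : ∀ x, ∑ y, condYX P y x = 1 := by
    intro x
    simp only [condYX]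
    rw [← Finset.sum_div]
    rw [margX, div_self]
    exact ne_of_gt (by simpa [margX] using hmx x)
  have hper : ∀ t, clusterMaxTerm P T t ≤ C t := by
    intro t
    rw [clusterMaxTerm]
    split_ifs with h
    · -- nonempty cluster
      have hAne : (Finset.univ.filter fun x => T x = t).Nonempty := by
        rcases h with ⟨⟨a, b⟩, hab⟩
        rw [Finset.mem_product] at hab
        exact ⟨a, hab.1⟩
      have hq : 0 < ∑ x ∈ Finset.univ.filter (fun x => T x = t), margX P x :=
        Finset.sum_pos (fun x _ => hmx x) hAne
      have hJ : ∀ y, 0 < jointT P T t y := fun y =>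
        Finset.sum_pos (fun x _ => hP x y) hAne
      have hQpos : ∀ y, 0 < condYT P T t y := fun y => div_pos (hJ y) hq
      have hQsum : ∑ y, condYT P T t y = 1 := by
        simp only [condYT]
        rw [← Finset.sum_div]
        rw [show ∑ y, jointT P T t y = ∑ x ∈ Finset.univ.filter (fun x => T x = t), margX P x
          from by simpa [margX] using margX_jointT P T t]
        exact div_self hq.ne'
      have hklnn : ∀ x ∈ Finset.univ.filter (fun x => T x = t),
          0 ≤ margX P x * KL (fun y => condYX P y x) (condYT P T t) := fun x _ =>
        mul_nonneg (hmx x).le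
          (kl_nonneg (fun y => hcondYX_pos x y) hQpos (hcondYX_sum x) hQsum)
      apply Finset.sup'_le
      rintro ⟨x₁, x₂⟩ hmem
      rw [Finset.mem_product] at hmem
      obtain ⟨h1, h2⟩ := hmem
      rcases eq_or_ne x₁ x₂ with rfl | hne
      · -- diagonal pair: pairTerm = 0
        have hD : D1 (fun y => condYX P y x₁) (fun y => condYX P y x₁) = 0 := by
          simp [D1]
        rw [pairTerm, hD]
        simpa using Finset.sum_nonneg hklnn
      · have hjs := js_bound (hmx x₁) (hmx x₂) (fun y => hcondYX_pos x₁ y)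
          (fun y => hcondYX_pos x₂ y) hQpos (hcondYX_sum x₁) (hcondYX_sum x₂) hQsum
        rw [pairTerm]
        refine le_trans hjs ?_
        have hpair : margX P x₁ * KL (fun y => condYX P y x₁) (condYT P T t)
            + margX P x₂ * KL (fun y => condYX P y x₂) (condYT P T t)
            = ∑ z ∈ ({x₁, x₂} : Finset α),
                margX P z * KL (fun y => condYX P y z) (condYT P T t) :=
          (Finset.sum_pair (f := fun z => margX P z * KL (fun y => condYX P y z)
            (condYT P T t)) hne).symm
        rw [hpair]
        apply Finset.sum_le_sum_of_subset_of_nonneg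
        · intro z hz
          rw [Finset.mem_insert, Finset.mem_singleton] at hz
          rcases hz with rfl | rfl
          · exact h1
          · exact h2
        · intro z hz _
          exact hklnn z hz
    · -- empty cluster
      have hAe : (Finset.univ.filter fun x => T x = t) = ∅ := by
        rw [Finset.not_nonempty_iff_eq_empty] at h
        rcases Finset.eq_empty_or_nonempty (Finset.univ.filter fun x => T x = t) with he | hne
        · exact he
        · exact absurd (Finset.Nonempty.product hne hne) (by simpa using h)
      simp [hC, hAe]
  calc ∑ t, clusterMaxTerm P T t ≤ ∑ t, C t := Finset.sum_le_sum fun t _ => hper t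
    _ = MI P - MI (jointT P T) := hdecomp.symm
    _ ≤ ε := hloss
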